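/- In Ruleset C of Quantum Nim (where a single classical move is legal only if it is legal in every realisation; superposed moves of at least two classical moves are legal as usual), a superposition of ℓ single Nim heaps with maximum heap size k has Grundy value k if ℓ = 1, and k−1 if ℓ ≥ 2. -/
import Mathlib


namespace QGame

variable {Pos Move : Type} [DecidableEq Pos]

/-- Result of applying the superposed move `M` (a finite set of classical move
labels) to the superposition `S` of classical positions: the set of all results
of a classical move of `M` applied to a realisation where it is legal. -/
def qApply (Γ : Pos → Move → Option Pos) (S : Finset Pos) (M : Finset Move) :
    Finset Pos :=
  S.biUnion fun G => M.biUnion fun m => (Γ G m).toFinset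

/-- The classical move `m` is legal in at least one realisation of `S`. -/
def MoveLegal (Γ : Pos → Move → Option Pos) (S : Finset Pos) (m : Move) : Prop :=
  ∃ G ∈ S, (Γ G m).isSome

/-- Basic legality of a Q-move: nonempty, and each classical move is legal
in at least one realisation. -/
def QBase (Γ : Pos → Move → Option Pos) (S : Finset Pos) (M : Finset Move) : Prop :=
  M.Nonempty ∧ ∀ m ∈ M, MoveLegal Γ S m

/-- Ruleset A : superpositions of at least two distinct classical moves. -/
def QLegalA (Γ : Pos → Move → Option Pos) (S : Finset Pos) (M : Finset Move) : Prop :=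
  QBase Γ S M ∧ 2 ≤ M.card

/-- Ruleset B : as A, except a lone classical move may be played when it is the
only legal classical move over all realisations. -/
def QLegalB (Γ : Pos → Move → Option Pos) (S : Finset Pos) (M : Finset Move) : Prop :=
  QBase Γ S M ∧ (2 ≤ M.card ∨ ∀ m, MoveLegal Γ S m → m ∈ M)

/-- Ruleset C : a lone classical move must be legal in every realisation. -/
def QLegalC (Γ : Pos → Move → Option Pos) (S : Finset Pos) (M : Finset Move) : Prop :=
  QBase Γ S M ∧ (2 ≤ M.card ∨ ∀ G ∈ S, ∀ m ∈ M, (Γ G m).isSome)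

/-- A single classical move is C'-allowed: legal in every realisation where the
mover still has at least one classical move. -/
def SingleLegalC' (Γ : Pos → Move → Option Pos) (S : Finset Pos) (m : Move) : Prop :=
  ∀ G ∈ S, (∃ m', (Γ G m').isSome) → (Γ G m).isSome

/-- Ruleset C'. -/
def QLegalC' (Γ : Pos → Move → Option Pos) (S : Finset Pos) (M : Finset Move) : Prop :=
  QBase Γ S M ∧ (2 ≤ M.card ∨ ∀ m ∈ M, SingleLegalC' Γ S m)

/-- Ruleset D : any nonempty superposition of legal classical moves. -/
def QLegalD (Γ : Pos → Move → Option Pos) (S : Finset Pos) (M : Finset Move) : Prop :=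
  QBase Γ S M

def optA (Γ : Pos → Move → Option Pos) (S : Finset Pos) : Set (Finset Pos) :=
  {T | ∃ M, QLegalA Γ S M ∧ T = qApply Γ S M}
def optB (Γ : Pos → Move → Option Pos) (S : Finset Pos) : Set (Finset Pos) :=
  {T | ∃ M, QLegalB Γ S M ∧ T = qApply Γ S M}
def optC (Γ : Pos → Move → Option Pos) (S : Finset Pos) : Set (Finset Pos) :=
  {T | ∃ M, QLegalC Γ S M ∧ T = qApply Γ S M}
def optC' (Γ : Pos → Move → Option Pos) (S : Finset Pos) : Set (Finset Pos) :=
  {T | ∃ M, QLegalC' Γ S M ∧ T = qApply Γ S M}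
def optD (Γ : Pos → Move → Option Pos) (S : Finset Pos) : Set (Finset Pos) :=
  {T | ∃ M, QLegalD Γ S M ∧ T = qApply Γ S M}

/-- `NPos opt p` : under normal play, the player to move from `p` wins,
i.e. there is a move to a position all of whose options are again `NPos`
(that is, to a previous-player-win position). -/
inductive NPos {α : Type*} (opt : α → Set α) : α → Prop where
  | mk (p q : α) (hq : q ∈ opt p) (h : ∀ r, r ∈ opt q → NPos opt r) :
      NPos opt p

/-- `PPos opt p` : `p` is a previous-player win (the second player wins)
under normal play: every option is a next-player win. -/
def PPos {α : Type*} (opt : α → Set α) (p : α) : Prop :=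
  ∀ q ∈ opt p, NPos opt q

/-- Options of the sum of a game with a classical Nim heap: move in the game
component, or decrease the heap component. -/
def sumNimOpt {α : Type*} (opt : α → Set α) : α × ℕ → Set (α × ℕ) :=
  fun x => {y | (y.1 ∈ opt x.1 ∧ y.2 = x.2) ∨ (y.1 = x.1 ∧ y.2 < x.2)}

/-- `HasGrundy opt p n` : position `p` has Sprague–Grundy value `n` (the value
obtained by the mex rule). By the Sprague–Grundy theorem this holds iff the sum
of `p` with a Nim heap of `n` tokens is a previous-player win. -/
def HasGrundy {α : Type*} (opt : α → Set α) (p : α) (n : ℕ) : Prop :=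
  PPos (sumNimOpt opt) (p, n)

/-- Classical single-heap Nim: from a heap of `n` tokens, the move labelled `x`
removes `x` tokens, legal when `1 ≤ x ≤ n`. -/
def nimΓ : ℕ → ℕ → Option ℕ := fun n x =>
  if 1 ≤ x ∧ x ≤ n then some (n - x) else none

end QGame

namespace QGame

/-- Claimed Grundy value of a superposition. -/
def val (S : Finset ℕ) : ℕ := if 2 ≤ S.card then S.sup id - 1 else S.sup id

lemma nim_isSome_iff {G m : ℕ} : (nimΓ G m).isSome ↔ 1 ≤ m ∧ m ≤ G := by
  unfold nimΓ; split_ifs with h <;> simp [h]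

lemma mem_qApply_nim {S M : Finset ℕ} {t : ℕ} :
    t ∈ qApply nimΓ S M ↔ ∃ G ∈ S, ∃ m ∈ M, 1 ≤ m ∧ m ≤ G ∧ G - m = t := by
  simp only [qApply, Finset.mem_biUnion, Option.mem_toFinset, Option.mem_def]
  constructor
  · rintro ⟨G, hG, m, hm, ht⟩
    unfold nimΓ at ht
    by_cases h : 1 ≤ m ∧ m ≤ G
    · rw [if_pos h] at ht
      exact ⟨G, hG, m, hm, h.1, h.2, Option.some_inj.mp ht⟩
    · rw [if_neg h] at ht
      exact absurd ht (by simp)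
  · rintro ⟨G, hG, m, hm, h1, h2, rfl⟩
    exact ⟨G, hG, m, hm, by unfold nimΓ; rw [if_pos ⟨h1, h2⟩]⟩

lemma sup_id_mem {S : Finset ℕ} (hS : S.Nonempty) : S.sup id ∈ S := by
  have := S.max'_mem hS
  rwa [Finset.max'_eq_sup', Finset.sup'_eq_sup] at this

lemma optC_nonempty_sup {S T : Finset ℕ} (hT : T ∈ optC nimΓ S) :
    T.Nonempty ∧ T.sup id < S.sup id := by
  obtain ⟨M, ⟨⟨hMne, hleg⟩, _⟩, rfl⟩ := hT
  obtain ⟨m₀, hm₀⟩ := hMne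
  obtain ⟨G₀, hG₀, hsome⟩ := hleg m₀ hm₀
  obtain ⟨h1, h2⟩ := nim_isSome_iff.mp hsome
  have hG₀k : G₀ ≤ S.sup id := Finset.le_sup (f := id) hG₀
  have hmem : G₀ - m₀ ∈ qApply nimΓ S M :=
    mem_qApply_nim.mpr ⟨G₀, hG₀, m₀, hm₀, h1, h2, rfl⟩
  refine ⟨⟨_, hmem⟩, ?_⟩
  have h0 : 0 < S.sup id := by omega
  rw [Finset.sup_lt_iff h0]
  intro t ht
  obtain ⟨G, hG, m, hm, hm1, hm2, rfl⟩ := mem_qApply_nim.mp ht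
  have := Finset.le_sup (f := id) hG
  simp only [id] at *
  omega

lemma val_lt_of_optC {S T : Finset ℕ} (hT : T ∈ optC nimΓ S) : val T < val S := by
  obtain ⟨M, ⟨⟨hMne, hleg⟩, hC⟩, rfl⟩ := hT
  obtain ⟨m₀, hm₀⟩ := hMne
  obtain ⟨G₀, hG₀, hsome⟩ := hleg m₀ hm₀
  obtain ⟨h1, h2⟩ := nim_isSome_iff.mp hsome
  have hS : S.Nonempty := ⟨G₀, hG₀⟩
  have hkS : S.sup id ∈ S := sup_id_mem hS
  have hG₀k : G₀ ≤ S.sup id := Finset.le_sup (f := id) hG₀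
  have hsupT : (qApply nimΓ S M).sup id ≤ S.sup id - 1 := by
    apply Finset.sup_le
    intro t ht
    obtain ⟨G, hG, m, hm, hm1, hm2, rfl⟩ := mem_qApply_nim.mp ht
    have := Finset.le_sup (f := id) hG
    simp only [id] at *
    omega
  by_cases h2M : 2 ≤ M.card
  · obtain ⟨x, hx, y, hy, hxy⟩ := Finset.one_lt_card.mp h2M
    obtain ⟨Gx, hGx, hsx⟩ := hleg x hx
    obtain ⟨Gy, hGy, hsy⟩ := hleg y hy
    obtain ⟨hx1, hx2⟩ := nim_isSome_iff.mp hsx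
    obtain ⟨hy1, hy2⟩ := nim_isSome_iff.mp hsy
    have hGxk : Gx ≤ S.sup id := Finset.le_sup (f := id) hGx
    have hGyk : Gy ≤ S.sup id := Finset.le_sup (f := id) hGy
    have hmx : S.sup id - x ∈ qApply nimΓ S M :=
      mem_qApply_nim.mpr ⟨S.sup id, hkS, x, hx, hx1, by omega, rfl⟩
    have hmy : S.sup id - y ∈ qApply nimΓ S M :=
      mem_qApply_nim.mpr ⟨S.sup id, hkS, y, hy, hy1, by omega, rfl⟩
    have h2T : 2 ≤ (qApply nimΓ S M).card :=
      Finset.one_lt_card.mpr ⟨_, hmx, _, hmy, by omega⟩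
    have hk2 : 2 ≤ S.sup id := by omega
    unfold val; split_ifs <;> omega
  · have hall : ∀ G ∈ S, ∀ m ∈ M, (nimΓ G m).isSome := hC.resolve_left h2M
    by_cases h2S : 2 ≤ S.card
    · obtain ⟨G₁, hG₁, G₂, hG₂, hGne⟩ := Finset.one_lt_card.mp h2S
      obtain ⟨l₁1, l₁2⟩ := nim_isSome_iff.mp (hall G₁ hG₁ m₀ hm₀)
      obtain ⟨l₂1, l₂2⟩ := nim_isSome_iff.mp (hall G₂ hG₂ m₀ hm₀)
      have t₁ : G₁ - m₀ ∈ qApply nimΓ S M :=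
        mem_qApply_nim.mpr ⟨G₁, hG₁, m₀, hm₀, l₁1, l₁2, rfl⟩
      have t₂ : G₂ - m₀ ∈ qApply nimΓ S M :=
        mem_qApply_nim.mpr ⟨G₂, hG₂, m₀, hm₀, l₂1, l₂2, rfl⟩
      have h2T : 2 ≤ (qApply nimΓ S M).card :=
        Finset.one_lt_card.mpr ⟨_, t₁, _, t₂, by omega⟩
      have hG₁k : G₁ ≤ S.sup id := Finset.le_sup (f := id) hG₁
      have hG₂k : G₂ ≤ S.sup id := Finset.le_sup (f := id) hG₂
      have hk2 : 2 ≤ S.sup id := by omega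
      unfold val; split_ifs <;> omega
    · unfold val; split_ifs <;> omega

lemma exists_optC {S : Finset ℕ} (hS : S.Nonempty) {n : ℕ} (hn : n < val S) :
    ∃ T ∈ optC nimΓ S, val T = n := by
  by_cases h2S : 2 ≤ S.card
  · have hvs : val S = S.sup id - 1 := by unfold val; rw [if_pos h2S]
    have hkS : S.sup id ∈ S := sup_id_mem hS
    set k := S.sup id with hk
    have hn' : n + 2 ≤ k := by omega
    refine ⟨qApply nimΓ S {k - n - 1, k - n},
      ⟨{k - n - 1, k - n}, ⟨⟨⟨k - n - 1, by simp⟩, ?_⟩, Or.inl ?_⟩, rfl⟩, ?_⟩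
    · intro m hm
      simp only [Finset.mem_insert, Finset.mem_singleton] at hm
      refine ⟨k, hkS, ?_⟩
      rw [nim_isSome_iff]; omega
    · rw [Finset.card_pair (by omega)]
    · have hmemn : n ∈ qApply nimΓ S {k - n - 1, k - n} :=
        mem_qApply_nim.mpr ⟨k, hkS, k - n, by simp, by omega, by omega, by omega⟩
      have hmemn1 : n + 1 ∈ qApply nimΓ S {k - n - 1, k - n} :=
        mem_qApply_nim.mpr ⟨k, hkS, k - n - 1, by simp, by omega, by omega, by omega⟩
      have hub : (qApply nimΓ S {k - n - 1, k - n}).sup id ≤ n + 1 := by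
        apply Finset.sup_le
        intro t ht
        obtain ⟨G, hG, m, hm, h1, h2, rfl⟩ := mem_qApply_nim.mp ht
        have hGk : G ≤ k := Finset.le_sup (f := id) hG
        simp only [Finset.mem_insert, Finset.mem_singleton] at hm
        simp only [id]
        omega
      have hlb : n + 1 ≤ (qApply nimΓ S {k - n - 1, k - n}).sup id :=
        Finset.le_sup (f := id) hmemn1
      have h2T : 2 ≤ (qApply nimΓ S {k - n - 1, k - n}).card :=
        Finset.one_lt_card.mpr ⟨n, hmemn, n + 1, hmemn1, by omega⟩
      unfold val; rw [if_pos h2T]; omega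
  · have h1 : S.card = 1 := by
      have := Finset.card_pos.mpr hS; omega
    obtain ⟨g, rfl⟩ := Finset.card_eq_one.mp h1
    have hvs : val {g} = g := by unfold val; simp
    rw [hvs] at hn
    have hTeq : qApply nimΓ {g} {g - n} = {n} := by
      ext t
      rw [mem_qApply_nim]
      simp only [Finset.mem_singleton]
      constructor
      · rintro ⟨G, hG, m, hm, hm1, hm2, rfl⟩; omega
      · intro ht
        exact ⟨g, rfl, g - n, rfl, by omega, by omega, by omega⟩
    refine ⟨qApply nimΓ {g} {g - n},
      ⟨{g - n}, ⟨⟨⟨g - n, by simp⟩, ?_⟩, Or.inr ?_⟩, rfl⟩, ?_⟩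
    · intro m hm
      simp only [Finset.mem_singleton] at hm
      exact ⟨g, by simp, by rw [nim_isSome_iff]; omega⟩
    · intro G hG m hm
      simp only [Finset.mem_singleton] at hG hm
      subst hG; subst hm
      rw [nim_isSome_iff]; omega
    · rw [hTeq]; unfold val; simp

lemma main_lemma (N : ℕ) : ∀ S : Finset ℕ, ∀ n : ℕ, S.Nonempty → S.sup id + n ≤ N →
    (val S = n → PPos (sumNimOpt (optC nimΓ)) (S, n)) ∧
    (val S ≠ n → NPos (sumNimOpt (optC nimΓ)) (S, n)) := by
  induction N using Nat.strong_induction_on with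
  | _ N IH =>
  intro S n hS hN
  constructor
  · intro hv q hq
    obtain ⟨T, n'⟩ := q
    simp only [sumNimOpt, Set.mem_setOf_eq] at hq
    rcases hq with ⟨hT, hn'⟩ | ⟨hTS, hn'⟩
    · obtain ⟨hTne, hsup⟩ := optC_nonempty_sup hT
      have hvlt := val_lt_of_optC hT
      exact (IH (T.sup id + n') (by omega) T n' hTne le_rfl).2 (by omega)
    · rw [hTS]
      exact (IH (S.sup id + n') (by omega) S n' hS le_rfl).2 (by omega)
  · intro hv
    rcases lt_or_gt_of_ne hv with h | h
    · refine NPos.mk _ (S, val S) ?_ ?_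
      · exact Or.inr ⟨rfl, h⟩
      · exact (IH (S.sup id + val S) (by omega) S (val S) hS le_rfl).1 rfl
    · obtain ⟨T, hT, hvT⟩ := exists_optC hS h
      obtain ⟨hTne, hsup⟩ := optC_nonempty_sup hT
      refine NPos.mk _ (T, n) ?_ ?_
      · exact Or.inl ⟨hT, rfl⟩
      · exact (IH (T.sup id + n) (by omega) T n hTne le_rfl).1 hvT

/-- In Ruleset C of Quantum Nim, a superposition of `ℓ` single
Nim heaps with maximum heap size `k` has Grundy value `k` if `ℓ = 1` and
`k - 1` if `ℓ ≥ 2`. -/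
theorem rulesetC_single_heap_value (S : Finset ℕ) (hS : S.Nonempty) (k : ℕ)
    (hmax : S.max' hS = k) :
    (S.card = 1 → HasGrundy (optC nimΓ) S k) ∧
    (2 ≤ S.card → HasGrundy (optC nimΓ) S (k - 1)) := by
  have hsup : S.sup id = k := by
    rw [← hmax, Finset.max'_eq_sup', Finset.sup'_eq_sup]
  constructor
  · intro h1
    have hv : val S = k := by unfold val; rw [if_neg (by omega), hsup]
    exact (main_lemma (S.sup id + k) S k hS le_rfl).1 hv
  · intro h2
    have hv : val S = k - 1 := by unfold val; rw [if_pos h2, hsup]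
    exact (main_lemma (S.sup id + (k - 1)) S (k - 1) hS le_rfl).1 hv

end QGame
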